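/- Let X be a length space and I ⊆ ℝ a nondegenerate interval. Then the null distance d̂_σ of the Lorentzian product I × X (warping function f ≡ 1) satisfies, for all (s,x), (t,y) ∈ I × X: d̂_σ((s,x),(t,y)) = max(|s − t|, d(x,y)). Equivalently, d̂_σ((s,x),(t,y)) = |s − t| when (s,x) and (t,y) are causally related (i.e. d(x,y) ≤ |s − t|), and d̂_σ((s,x),(t,y)) = d(x,y) otherwise. -/

import Mathlib

open MeasureTheory

def WPCausal {X : Type*} [MetricSpace X] (f : ℝ → ℝ) (p q : ℝ × X) : Prop :=
  p.1 ≤ q.1 ∧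
    ENNReal.ofReal (dist p.2 q.2) ≤ ∫⁻ u in Set.Ioc p.1 q.1, ENNReal.ofReal ((f u)⁻¹)

def WPChain {X : Type*} [MetricSpace X] (I : Set ℝ) (f : ℝ → ℝ) (p q : ℝ × X) (n : ℕ)
    (σ : ℕ → ℝ × X) : Prop :=
  σ 0 = p ∧ σ (n + 1) = q ∧ (∀ i ≤ n + 1, (σ i).1 ∈ I) ∧
    ∀ i ≤ n, WPCausal f (σ i) (σ (i + 1)) ∨ WPCausal f (σ (i + 1)) (σ i)

noncomputable def nullDist {X : Type*} [MetricSpace X] (I : Set ℝ) (f : ℝ → ℝ)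
    (p q : ℝ × X) : ℝ :=
  sInf { r | ∃ n σ, WPChain I f p q n σ ∧
    r = ∑ i ∈ Finset.range (n + 1), |(σ (i + 1)).1 - (σ i).1| }

lemma causal_one_iff {X : Type*} [MetricSpace X] (p q : ℝ × X) :
    WPCausal (fun _ => (1:ℝ)) p q ↔ p.1 ≤ q.1 ∧ dist p.2 q.2 ≤ q.1 - p.1 := by
  unfold WPCausal
  rw [show (∫⁻ u in Set.Ioc p.1 q.1, ENNReal.ofReal (((fun _ => (1:ℝ)) u)⁻¹))
      = ENNReal.ofReal (q.1 - p.1) by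
    simp [MeasureTheory.setLIntegral_const, Real.volume_Ioc]]
  constructor
  · rintro ⟨h1, h2⟩
    exact ⟨h1, by rwa [ENNReal.ofReal_le_ofReal_iff (by linarith)] at h2⟩
  · rintro ⟨h1, h2⟩
    exact ⟨h1, ENNReal.ofReal_le_ofReal h2⟩

lemma chain_lower {X : Type*} [MetricSpace X] {I : Set ℝ} {p q : ℝ × X} {n : ℕ}
    {σ : ℕ → ℝ × X} (h : WPChain I (fun _ => (1:ℝ)) p q n σ) :
    max |p.1 - q.1| (dist p.2 q.2) ≤ ∑ i ∈ Finset.range (n+1), |(σ (i+1)).1 - (σ i).1| := by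
  obtain ⟨h0, h1, _, hc⟩ := h
  apply max_le
  · have htel := Finset.sum_range_sub (fun i => (σ i).1) (n+1)
    calc |p.1 - q.1| = |∑ i ∈ Finset.range (n+1), ((σ (i+1)).1 - (σ i).1)| := by
          rw [htel, h0, h1, abs_sub_comm]
      _ ≤ ∑ i ∈ Finset.range (n+1), |(σ (i+1)).1 - (σ i).1| :=
          Finset.abs_sum_le_sum_abs _ _
  · calc dist p.2 q.2 = dist (σ 0).2 (σ (n+1)).2 := by rw [h0, h1]
      _ ≤ ∑ i ∈ Finset.range (n+1), dist (σ i).2 (σ (i+1)).2 :=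
          dist_le_range_sum_dist (fun i => (σ i).2) (n+1)
      _ ≤ ∑ i ∈ Finset.range (n+1), |(σ (i+1)).1 - (σ i).1| := by
          apply Finset.sum_le_sum
          intro i hi
          rcases hc i (Nat.lt_succ_iff.mp (Finset.mem_range.mp hi)) with hcc | hcc
          · obtain ⟨ha, hb⟩ := (causal_one_iff _ _).mp hcc
            calc dist (σ i).2 (σ (i+1)).2 ≤ (σ (i+1)).1 - (σ i).1 := hb
              _ ≤ |(σ (i+1)).1 - (σ i).1| := le_abs_self _
          · obtain ⟨ha, hb⟩ := (causal_one_iff _ _).mp hcc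
            calc dist (σ i).2 (σ (i+1)).2 = dist (σ (i+1)).2 (σ i).2 := dist_comm _ _
              _ ≤ (σ i).1 - (σ (i+1)).1 := hb
              _ ≤ |(σ (i+1)).1 - (σ i).1| := by rw [abs_sub_comm]; exact le_abs_self _

lemma subdiv {X : Type*} [MetricSpace X]
    (hX : ∀ x y : X, ∀ ε : ℝ, 0 < ε →
      ∃ z : X, max (dist x z) (dist z y) ≤ dist x y / 2 + ε) (k : ℕ) :
    ∀ (x y : X) (ε : ℝ), 0 < ε → ∃ z : ℕ → X, z 0 = x ∧ z (2^k) = y ∧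
      ∀ i < 2^k, dist (z i) (z (i+1)) ≤ dist x y / 2^k + ε := by
  induction k with
  | zero =>
    intro x y ε hε
    refine ⟨fun i => if i = 0 then x else y, by simp, by simp, ?_⟩
    intro i hi
    have : i = 0 := by omega
    subst this
    simp
    linarith
  | succ k ih =>
    intro x y ε hε
    obtain ⟨m, hm⟩ := hX x y (ε * 2^k / 2) (by positivity)
    obtain ⟨z1, hz10, hz11, hz1⟩ := ih x m (ε/2) (by positivity)
    obtain ⟨z2, hz20, hz21, hz2⟩ := ih m y (ε/2) (by positivity)
    have hps : (2:ℕ)^(k+1) = 2^k * 2 := pow_succ 2 k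
    have hpos : 0 < (2:ℕ)^k := Nat.pow_pos (by norm_num)
    refine ⟨fun i => if i ≤ 2^k then z1 i else z2 (i - 2^k), by simp [hz10], ?_, ?_⟩
    · beta_reduce
      rw [if_neg (by omega), show 2^(k+1) - 2^k = 2^k by omega, hz21]
    · intro i hi
      have hdm : dist x m ≤ dist x y / 2 + ε * 2^k / 2 := le_trans (le_max_left _ _) hm
      have hdm2 : dist m y ≤ dist x y / 2 + ε * 2^k / 2 := le_trans (le_max_right _ _) hm
      have key : ∀ d : ℝ, d ≤ dist x y / 2 + ε * 2^k / 2 →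
          d / 2^k + ε/2 ≤ dist x y / 2^(k+1) + ε := by
        intro d hd
        have h2k : (0:ℝ) < 2^k := by positivity
        have h3 : (dist x y / 2 + ε * 2^k / 2) / 2^k = dist x y / 2^(k+1) + ε/2 := by
          rw [pow_succ]; field_simp
        have h4 := (div_le_div_iff_of_pos_right h2k).mpr hd
        rw [h3] at h4
        linarith
      beta_reduce
      rcases lt_trichotomy i (2^k) with h | h | h
      · rw [if_pos (le_of_lt h), if_pos (by omega)]
        exact le_trans (hz1 i h) (key _ hdm)
      · subst h
        rw [if_pos le_rfl, if_neg (by omega), hz11, show 2^k + 1 - 2^k = 1 by omega]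
        have := hz2 0 hpos
        rw [hz20] at this
        exact le_trans this (key _ hdm2)
      · rw [if_neg (by omega), if_neg (by omega)]
        have hlt : i - 2^k < 2^k := by omega
        have := hz2 (i - 2^k) hlt
        rw [show i + 1 - 2^k = i - 2^k + 1 by omega]
        exact le_trans this (key _ hdm2)

noncomputable def greedy (t m : ℝ) (δ : ℕ → ℝ) (s : ℝ) : ℕ → ℝ
  | 0 => s
  | (i+1) =>
    let a := greedy t m δ s i
    if δ i ≤ |a - t| then (if a ≤ t then a + δ i else a - δ i)
    else (if a ≤ m then a + δ i else a - δ i)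

lemma greedy_step (t m : ℝ) (δ : ℕ → ℝ) (s : ℝ) (hδ : ∀ i, 0 ≤ δ i) (i : ℕ) :
    |greedy t m δ s (i+1) - greedy t m δ s i| = δ i := by
  have h := hδ i
  simp only [greedy]
  split <;> split <;>
    simp only [add_sub_cancel_left, sub_sub_cancel_left, abs_neg] <;>
    exact abs_of_nonneg h

lemma greedy_mem (t u v : ℝ) (δ : ℕ → ℝ) (s : ℝ) (δs : ℝ)
    (hδ : ∀ i, 0 ≤ δ i ∧ δ i ≤ δs) (hs : s ∈ Set.Icc u v) (ht : t ∈ Set.Icc u v)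
    (hroom : u + 2 * δs ≤ v) (i : ℕ) :
    greedy t ((u+v)/2) δ s i ∈ Set.Icc u v := by
  induction i with
  | zero => exact hs
  | succ i ih =>
    obtain ⟨ih1, ih2⟩ := ih
    obtain ⟨hd0, hd1⟩ := hδ i
    obtain ⟨ht1, ht2⟩ := ht
    set a := greedy t ((u+v)/2) δ s i with ha
    simp only [greedy, ← ha]
    split
    · rename_i hcase
      split
      · rename_i hle
        rw [abs_of_nonpos (by linarith)] at hcase
        constructor <;> [linarith; linarith]
      · rename_i hgt
        push_neg at hgt
        rw [abs_of_nonneg (by linarith)] at hcase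
        constructor <;> [linarith; linarith]
    · split
      · rename_i hle
        constructor <;> [linarith; linarith]
      · rename_i hgt
        push_neg at hgt
        constructor <;> [linarith; linarith]

lemma greedy_progress (t u v : ℝ) (δ : ℕ → ℝ) (s : ℝ) (δs : ℝ)
    (hδ : ∀ i, 0 ≤ δ i ∧ δ i ≤ δs) (i : ℕ) :
    |greedy t ((u+v)/2) δ s i - t| ≤
      max (|s - t| - ∑ j ∈ Finset.range i, δ j) (2 * δs) := by
  induction i with
  | zero => simp [greedy]
  | succ i ih =>
    obtain ⟨hd0, hd1⟩ := hδ i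
    set a := greedy t ((u+v)/2) δ s i with ha
    rw [Finset.sum_range_succ]
    simp only [greedy, ← ha]
    split
    · rename_i hcase
      have key : |(if a ≤ t then a + δ i else a - δ i) - t| = |a - t| - δ i := by
        split
        · rename_i hle
          rw [abs_of_nonpos (show a - t ≤ 0 by linarith)] at hcase
          rw [abs_of_nonpos (show a + δ i - t ≤ 0 by linarith),
            abs_of_nonpos (show a - t ≤ 0 by linarith)]
          ring
        · rename_i hgt
          push_neg at hgt
          rw [abs_of_nonneg (show (0:ℝ) ≤ a - t by linarith)] at hcase
          rw [abs_of_nonneg (show (0:ℝ) ≤ a - δ i - t by linarith),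
            abs_of_nonneg (show (0:ℝ) ≤ a - t by linarith)]
          ring
      rw [key]
      rcases le_max_iff.mp ih with h | h
      · exact le_max_of_le_left (by linarith)
      · exact le_max_of_le_right (by linarith)
    · rename_i hcase
      push_neg at hcase
      have hstep : |(if a ≤ (u+v)/2 then a + δ i else a - δ i) - t| ≤ |a - t| + δ i := by
        split
        · calc |a + δ i - t| = |(a - t) + δ i| := by ring_nf
            _ ≤ |a - t| + |δ i| := abs_add_le _ _
            _ = |a - t| + δ i := by rw [abs_of_nonneg hd0]
        · calc |a - δ i - t| = |(a - t) - δ i| := by ring_nf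
            _ ≤ |a - t| + |δ i| := abs_sub _ _
            _ = |a - t| + δ i := by rw [abs_of_nonneg hd0]
      exact le_max_of_le_right (by linarith)

/-- for a length space `X` and a nondegenerate interval `I`, the null distance
of the Lorentzian product `I × X` (warping function `f ≡ 1`) is
`d̂_σ((s,x),(t,y)) = max (|s − t|) (d(x,y))`. -/
theorem stmt3 {X : Type*} [MetricSpace X]
    (hX : ∀ x y : X, ∀ ε : ℝ, 0 < ε →
      ∃ z : X, max (dist x z) (dist z y) ≤ dist x y / 2 + ε)
    (I : Set ℝ) (hIc : I.OrdConnected) (hInd : ∃ a ∈ I, ∃ b ∈ I, a < b) :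
    ∀ s t : ℝ, ∀ x y : X, s ∈ I → t ∈ I →
      nullDist I (fun _ => (1 : ℝ)) (s, x) (t, y) = max |s - t| (dist x y) := by
  intro s t x y hs ht
  classical
  set S : Set ℝ := { r | ∃ n σ, WPChain I (fun _ => (1:ℝ)) (s, x) (t, y) n σ ∧
    r = ∑ i ∈ Finset.range (n + 1), |(σ (i + 1)).1 - (σ i).1| } with hSdef
  have hlow : ∀ r ∈ S, max |s - t| (dist x y) ≤ r := by
    rintro r ⟨n, σ, hch, rfl⟩
    simpa using chain_lower hch
  have hup : ∀ ε : ℝ, 0 < ε → ∃ r ∈ S, r ≤ max |s - t| (dist x y) + ε := by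
    intro ε hε
    by_cases hcase : dist x y ≤ |s - t|
    · -- single segment
      refine ⟨|s - t|, ⟨0, fun i => if i = 0 then (s, x) else (t, y), ⟨by simp, by simp,
        ?_, ?_⟩, by simp [abs_sub_comm]⟩, by
          have := le_max_left |s - t| (dist x y); linarith⟩
      · intro i hi
        interval_cases i <;> simpa
      · intro i hi
        have : i = 0 := by omega
        subst this
        rcases le_total s t with h | h
        · left
          rw [causal_one_iff]
          have habs : |s - t| = t - s := by rw [abs_sub_comm]; exact abs_of_nonneg (by linarith)
          simp only [if_pos rfl, if_neg (one_ne_zero)]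
          exact ⟨h, by rw [habs] at hcase; exact hcase⟩
        · right
          rw [causal_one_iff]
          have habs : |s - t| = s - t := abs_of_nonneg (by linarith)
          simp only [if_pos rfl, if_neg (one_ne_zero)]
          exact ⟨h, by rw [habs] at hcase; rw [dist_comm]; exact hcase⟩
    · push_neg at hcase
      obtain ⟨α, hα, β, hβ, hαβ⟩ := hInd
      have hminI : ∀ c e : ℝ, c ∈ I → e ∈ I → min c e ∈ I := by
        intro c e hc he; rcases min_choice c e with h | h <;> rw [h] <;> assumption
      have hmaxI : ∀ c e : ℝ, c ∈ I → e ∈ I → max c e ∈ I := by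
        intro c e hc he; rcases max_choice c e with h | h <;> rw [h] <;> assumption
      set u := min α (min s t) with hu
      set v := max β (max s t) with hv
      have huI : u ∈ I := hminI _ _ hα (hminI _ _ hs ht)
      have hvI : v ∈ I := hmaxI _ _ hβ (hmaxI _ _ hs ht)
      have huv : u < v :=
        lt_of_le_of_lt (min_le_left _ _) (lt_of_lt_of_le hαβ (le_max_left _ _))
      have hsI : s ∈ Set.Icc u v :=
        ⟨le_trans (min_le_right _ _) (min_le_left _ _),
         le_trans (le_max_left s t) (le_max_right β _)⟩
      have htI : t ∈ Set.Icc u v :=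
        ⟨le_trans (min_le_right _ _) (min_le_right _ _),
         le_trans (le_max_right s t) (le_max_right β _)⟩
      have hIcc : Set.Icc u v ⊆ I := hIc.out huI hvI
      set d := dist x y with hd
      set δs := min (ε/8) ((v - u)/2) with hδsdef
      have hδs0 : 0 < δs := lt_min (by linarith) (by linarith)
      have hroom : u + 2 * δs ≤ v := by
        have := min_le_right (ε/8) ((v - u)/2); linarith
      have hδsε : δs ≤ ε/8 := min_le_left _ _
      obtain ⟨k, hk⟩ := pow_unbounded_of_one_lt (2 * d / δs) (one_lt_two (α := ℝ))
      have h2k : (0:ℝ) < 2^k := by positivity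
      have hdk : d / 2^k ≤ δs / 2 := by
        rw [div_lt_iff₀ hδs0] at hk
        rw [div_le_div_iff₀ h2k two_pos]
        nlinarith
      set εsub := min (δs/2) (ε/(4 * 2^k)) with hεsubdef
      have hεsub0 : 0 < εsub := lt_min (by linarith) (by positivity)
      have hεsub1 : εsub ≤ δs/2 := min_le_left _ _
      have hεsub2 : εsub ≤ ε/(4 * 2^k) := min_le_right _ _
      obtain ⟨z, hz0, hzN, hzd⟩ := subdiv hX k x y εsub hεsub0
      set δ : ℕ → ℝ := fun i => if i < 2^k then dist (z i) (z (i+1)) else 0 with hδdef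
      have hδ : ∀ i, 0 ≤ δ i ∧ δ i ≤ δs := by
        intro i
        simp only [hδdef]
        split
        · rename_i h
          exact ⟨dist_nonneg, le_trans (hzd i h) (by rw [← hd]; linarith)⟩
        · exact ⟨le_rfl, le_of_lt hδs0⟩
      have hsum : ∑ j ∈ Finset.range (2^k), δ j ≤ d + ε/4 := by
        calc ∑ j ∈ Finset.range (2^k), δ j
            ≤ ∑ _j ∈ Finset.range (2^k), (d/2^k + εsub) := by
              apply Finset.sum_le_sum
              intro j hj
              simp only [hδdef]
              rw [if_pos (Finset.mem_range.mp hj)]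
              exact hzd j (Finset.mem_range.mp hj)
          _ = 2^k * (d/2^k + εsub) := by
              rw [Finset.sum_const, Finset.card_range, nsmul_eq_mul]
              push_cast
              ring
          _ ≤ d + ε/4 := by
              have h1 : (2^k : ℝ) * (d / 2^k) = d := by field_simp
              have h2 : (2^k : ℝ) * εsub ≤ ε/4 := by
                calc (2^k:ℝ) * εsub ≤ 2^k * (ε/(4 * 2^k)) := by
                      exact mul_le_mul_of_nonneg_left hεsub2 (le_of_lt h2k)
                  _ = ε/4 := by field_simp
              rw [mul_add, h1]
              linarith
      have hsumd : d ≤ ∑ j ∈ Finset.range (2^k), δ j := by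
        have hdz := dist_le_range_sum_dist z (2^k)
        rw [hz0, hzN] at hdz
        calc d ≤ ∑ i ∈ Finset.range (2^k), dist (z i) (z (i+1)) := hdz
          _ = ∑ j ∈ Finset.range (2^k), δ j := by
              apply Finset.sum_congr rfl
              intro j hj
              simp only [hδdef]
              rw [if_pos (Finset.mem_range.mp hj)]
      set a : ℕ → ℝ := greedy t ((u+v)/2) δ s with hadef
      have ha0 : a 0 = s := rfl
      have hastep : ∀ i, |a (i+1) - a i| = δ i :=
        greedy_step t _ δ s (fun i => (hδ i).1)
      have hamem : ∀ i, a i ∈ Set.Icc u v :=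
        greedy_mem t u v δ s δs hδ hsI htI hroom
      have haend : |a (2^k) - t| ≤ 2 * δs := by
        have hprog := greedy_progress t u v δ s δs hδ (2^k)
        rcases le_max_iff.mp hprog with h | h
        · linarith [abs_nonneg (a (2^k) - t)]
        · exact h
      set N := 2^k with hNdef
      set σc : ℕ → ℝ × X := fun i => if i ≤ N then (a i, z i) else (t, y) with hσdef
      refine ⟨_, ⟨N, σc, ⟨?_, ?_, ?_, ?_⟩, rfl⟩, ?_⟩
      · simp only [hσdef]
        rw [if_pos (Nat.zero_le N), ha0, hz0]
      · simp only [hσdef]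
        rw [if_neg (by omega)]
      · intro i hi
        simp only [hσdef]
        by_cases h : i ≤ N
        · rw [if_pos h]; exact hIcc (hamem i)
        · rw [if_neg h]; exact ht
      · intro i hi
        simp only [hσdef]
        rcases lt_or_eq_of_le hi with h | h
        · rw [if_pos (le_of_lt h), if_pos (by omega)]
          have hstep := hastep i
          have hdisteq : dist (z i) (z (i+1)) = δ i := by
            simp only [hδdef]; rw [if_pos h]
          rcases le_total (a i) (a (i+1)) with hle | hle
          · left
            rw [causal_one_iff]
            refine ⟨hle, ?_⟩
            have heq : δ i = a (i+1) - a i := by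
              rw [← hstep, abs_of_nonneg (by linarith)]
            simp only
            rw [hdisteq, heq]
          · right
            rw [causal_one_iff]
            refine ⟨hle, ?_⟩
            have heq : δ i = a i - a (i+1) := by
              rw [← hstep, abs_of_nonpos (by linarith)]; ring
            simp only
            rw [dist_comm, hdisteq, heq]
        · subst h
          rw [if_pos le_rfl, if_neg (by omega)]
          rcases le_total (a N) t with hle | hle
          · left
            rw [causal_one_iff]
            refine ⟨hle, ?_⟩
            simp only
            rw [hNdef, hzN, dist_self]
            linarith
          · right
            rw [causal_one_iff]
            refine ⟨hle, ?_⟩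
            simp only
            rw [hNdef, hzN, dist_comm, dist_self]
            linarith
      · rw [Finset.sum_range_succ]
        have hterm : ∀ i ∈ Finset.range N, |(σc (i+1)).1 - (σc i).1| = δ i := by
          intro i hi
          have hi' := Finset.mem_range.mp hi
          simp only [hσdef]
          rw [if_pos (by omega), if_pos (by omega)]
          exact hastep i
        have hlast : |(σc (N+1)).1 - (σc N).1| = |t - a N| := by
          simp only [hσdef]
          rw [if_neg (by omega), if_pos le_rfl]
        rw [Finset.sum_congr rfl hterm, hlast]
        have h1 : |t - a N| ≤ 2 * δs := by rw [abs_sub_comm]; exact haend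
        have hM : d ≤ max |s - t| (dist x y) := le_max_right _ _
        linarith [hsum]
  obtain ⟨r0, hr0S, _⟩ := hup 1 one_pos
  have hne : S.Nonempty := ⟨r0, hr0S⟩
  have hbdd : BddBelow S := ⟨max |s - t| (dist x y), hlow⟩
  show sInf S = max |s - t| (dist x y)
  apply le_antisymm
  · apply le_of_forall_pos_le_add
    intro ε hε
    obtain ⟨r, hrS, hr⟩ := hup ε hε
    exact le_trans (csInf_le hbdd hrS) hr
  · exact le_csInf hne hlow
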